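/- arXiv:2211.11027 — 3 statements merged into one kernel-verified Lean document; each statement's English description precedes it below -/
import Mathlib

section
/- (Lemma 1, set of models consistent with the data.) Consider the discrete-time linear system x(t+1) = A x(t) + B u(t) + w(t), y(t) = x(t) + v(t), with data matrices Y₋, Y₊, U₋ and noise realization matrices V₋, V₊, W₋ from a trajectory of length T+1. Suppose W₋ ∈ M_w, V₊ ∈ M_v, A V₋ ∈ M_{Av} for given sets M_w, M_v, M_{Av} ⊆ ℝ^{n×T}, and suppose the stacked data matrix D = [Y₋; U₋] ∈ ℝ^{(n+m)×T} admits a right inverse, i.e., there exists G ∈ ℝ^{T×(n+m)} with D·G = I_{n+m}. Then [A B] ∈ ({Y₊} ⊕ (−M_w) ⊕ (−M_v) ⊕ M_{Av})·G := { M·G : M ∈ {Y₊} ⊕ (−M_w) ⊕ (−M_v) ⊕ M_{Av} }. -/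
open Pointwise

/-- Lemma 1: for the system `x(t+1) = A x(t) + B u(t) + w(t)`,
`y(t) = x(t) + v(t)`, with data matrices from a trajectory of length `T+1`, if
`W₋ ∈ M_w`, `V₊ ∈ M_v`, `A V₋ ∈ M_{Av}`, and the stacked data matrix `D = [Y₋; U₋]`
admits a right inverse `G` (`D·G = I`), then
`[A B] ∈ ({Y₊} ⊕ (−M_w) ⊕ (−M_v) ⊕ M_{Av})·G`. -/
theorem AB_mem_consistent_model_set {n m T : ℕ}
    (A : Matrix (Fin n) (Fin n) ℝ) (B : Matrix (Fin n) (Fin m) ℝ)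
    (x w v y : ℕ → Fin n → ℝ) (u : ℕ → Fin m → ℝ)
    (hx : ∀ t, x (t + 1) = A.mulVec (x t) + B.mulVec (u t) + w t)
    (hy : ∀ t, y t = x t + v t)
    (Ym Yp Vm Vp Wm : Matrix (Fin n) (Fin T) ℝ) (Um : Matrix (Fin m) (Fin T) ℝ)
    (hYm : ∀ i (k : Fin T), Ym i k = y k i)
    (hYp : ∀ i (k : Fin T), Yp i k = y (k + 1) i)
    (hVm : ∀ i (k : Fin T), Vm i k = v k i)
    (hVp : ∀ i (k : Fin T), Vp i k = v (k + 1) i)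
    (hWm : ∀ i (k : Fin T), Wm i k = w k i)
    (hUm : ∀ i (k : Fin T), Um i k = u k i)
    (Mw Mv MAv : Set (Matrix (Fin n) (Fin T) ℝ))
    (hW : Wm ∈ Mw) (hV : Vp ∈ Mv) (hAV : A * Vm ∈ MAv)
    (G : Matrix (Fin T) (Fin n ⊕ Fin m) ℝ)
    (hG : Matrix.fromRows Ym Um * G = 1) :
    Matrix.fromCols A B ∈
      (fun M => M * G) ''
        (({Yp} : Set (Matrix (Fin n) (Fin T) ℝ)) + (-Mw) + (-Mv) + MAv) := by
  refine ⟨Yp + (-Wm) + (-Vp) + A * Vm,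
    Set.add_mem_add (Set.add_mem_add (Set.add_mem_add (Set.mem_singleton _)
      (Set.neg_mem_neg.mpr hW)) (Set.neg_mem_neg.mpr hV)) hAV, ?_⟩
  have key : Yp + (-Wm) + (-Vp) + A * Vm = Matrix.fromCols A B * Matrix.fromRows Ym Um := by
    rw [Matrix.fromCols_mul_fromRows]
    ext i k
    have h1 : y (↑k + 1) i = (A.mulVec (x ↑k) + B.mulVec (u ↑k) + w ↑k) i + v (↑k + 1) i := by
      rw [hy (↑k + 1), hx ↑k]; rfl
    simp only [Matrix.add_apply, Matrix.neg_apply, Matrix.mul_apply, hYp, hWm, hVp, hYm, hUm,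
      hVm, hy, Pi.add_apply, h1, Matrix.mulVec, dotProduct]
    simp [mul_add, Finset.sum_add_distrib]
    ring
  show (Yp + -Wm + -Vp + A * Vm) * G = _
  rw [key, Matrix.mul_assoc, hG, Matrix.mul_one]
end

section
/- (Lemma 2, N-step data-driven reachability over-approximation.) Consider the system x(t+1) = A x(t) + B u(t) + w(t), y(t) = x(t) + v(t). Let M_Σ ⊆ ℝ^{n×(n+m)} satisfy [A B] ∈ M_Σ, and let Z_{u,t} ⊆ ℝ^m (t ∈ ℕ), Z_w, Z_v, Z_{Av} ⊆ ℝ^n be given sets. Define the sets R̂_t ⊆ ℝ^n recursively by R̂_0 = {y(0)} and R̂_{t+1} = { M·(yᵀ, uᵀ)ᵀ : M ∈ M_Σ, y ∈ R̂_t, u ∈ Z_{u,t} } ⊕ Z_w ⊕ Z_v ⊕ (−Z_{Av}). If for all t ≥ 0 one has u(t) ∈ Z_{u,t}, w(t) ∈ Z_w, v(t) ∈ Z_v, and A v(t) ∈ Z_{Av}, then y(N) ∈ R̂_N for every N ∈ ℕ; in particular the true reachable set at time N is contained in R̂_N. -/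
open Pointwise

/-- Lemma 2, N-step data-driven reachability over-approximation: for the
system `x(t+1) = A x(t) + B u(t) + w(t)`, `y(t) = x(t) + v(t)`, with `[A B] ∈ M_Σ`, define
`R̂_0 = {y(0)}` and
`R̂_{t+1} = {M·(yᵀ,uᵀ)ᵀ : M ∈ M_Σ, y ∈ R̂_t, u ∈ Z_{u,t}} ⊕ Z_w ⊕ Z_v ⊕ (−Z_{Av})`.
If for all `t` one has `u(t) ∈ Z_{u,t}`, `w(t) ∈ Z_w`, `v(t) ∈ Z_v`, and
`A v(t) ∈ Z_{Av}`, then `y(N) ∈ R̂_N` for every `N`. -/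
theorem N_step_reachability_over_approximation {n m : ℕ}
    (A : Matrix (Fin n) (Fin n) ℝ) (B : Matrix (Fin n) (Fin m) ℝ)
    (x w v y : ℕ → Fin n → ℝ) (u : ℕ → Fin m → ℝ)
    (hx : ∀ t, x (t + 1) = A.mulVec (x t) + B.mulVec (u t) + w t)
    (hy : ∀ t, y t = x t + v t)
    (Msig : Set (Matrix (Fin n) (Fin n ⊕ Fin m) ℝ))
    (hAB : Matrix.fromCols A B ∈ Msig)
    (Zu : ℕ → Set (Fin m → ℝ)) (Zw Zv ZAv : Set (Fin n → ℝ))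
    (R : ℕ → Set (Fin n → ℝ))
    (hR0 : R 0 = {y 0})
    (hRsucc : ∀ t, R (t + 1) =
      {z : Fin n → ℝ | ∃ M ∈ Msig, ∃ yv ∈ R t, ∃ uv ∈ Zu t, z = M.mulVec (Sum.elim yv uv)}
        + Zw + Zv + (-ZAv))
    (hu : ∀ t, u t ∈ Zu t) (hw : ∀ t, w t ∈ Zw) (hv : ∀ t, v t ∈ Zv)
    (hAv : ∀ t, A.mulVec (v t) ∈ ZAv) :
    ∀ N : ℕ, y N ∈ R N := by
  intro N
  induction N with
  | zero => simp [hR0]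
  | succ t ih =>
    rw [hRsucc]
    have key : y (t + 1) =
        (Matrix.fromCols A B).mulVec (Sum.elim (y t) (u t)) + w t + v (t + 1)
          + (-(A.mulVec (v t))) := by
      rw [Matrix.fromCols_mulVec_sumElim, hy (t+1), hx t, hy t,
        Matrix.mulVec_add]
      abel
    rw [key]
    refine Set.add_mem_add (Set.add_mem_add (Set.add_mem_add ?_ (hw t)) (hv (t+1)))
      (Set.neg_mem_neg.mpr (hAv t))
    exact ⟨_, hAB, _, ih, _, hu t, rfl⟩
end

section
/- (Safety guarantee, core of Theorem 1.) Consider the system x(t+1) = A x(t) + B u(t) + w(t), y(t) = x(t) + v(t), with [A B] ∈ M_Σ ⊆ ℝ^{n×(n+m)}, and define R̂_0 = {y(0)} and R̂_{t+1} = { M·(yᵀ, uᵀ)ᵀ : M ∈ M_Σ, y ∈ R̂_t, u ∈ Z_{u,t} } ⊕ Z_w ⊕ Z_v ⊕ (−Z_{Av}). Suppose for all t the applied input satisfies u(t) ∈ Z_{u,t}, and the noises satisfy w(t) ∈ Z_w, v(t) ∈ Z_v, A v(t) ∈ Z_{Av}. Let Y_obs ⊆ ℝ^n denote the unsafe (obstacle)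 region, and suppose R̂_k ∩ Y_obs = ∅ for all k = 0, …, N. Then y(k) ∉ Y_obs for all k = 0, …, N; i.e., the executed trajectory avoids the obstacles over the planning horizon. -/
open Pointwise

/-- safety guarantee, core of Theorem 1: for the system
`x(t+1) = A x(t) + B u(t) + w(t)`, `y(t) = x(t) + v(t)`, with `[A B] ∈ M_Σ`, define
`R̂_0 = {y(0)}` and
`R̂_{t+1} = {M·(yᵀ,uᵀ)ᵀ : M ∈ M_Σ, y ∈ R̂_t, u ∈ Z_{u,t}} ⊕ Z_w ⊕ Z_v ⊕ (−Z_{Av})`.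
If for all `t` the applied input and noises satisfy `u(t) ∈ Z_{u,t}`, `w(t) ∈ Z_w`,
`v(t) ∈ Z_v`, `A v(t) ∈ Z_{Av}`, and `R̂_k ∩ Y_obs = ∅` for all `k = 0, …, N`, then
`y(k) ∉ Y_obs` for all `k = 0, …, N`. -/
theorem safety_guarantee {n m : ℕ}
    (A : Matrix (Fin n) (Fin n) ℝ) (B : Matrix (Fin n) (Fin m) ℝ)
    (x w v y : ℕ → Fin n → ℝ) (u : ℕ → Fin m → ℝ)
    (hx : ∀ t, x (t + 1) = A.mulVec (x t) + B.mulVec (u t) + w t)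
    (hy : ∀ t, y t = x t + v t)
    (Msig : Set (Matrix (Fin n) (Fin n ⊕ Fin m) ℝ))
    (hAB : Matrix.fromCols A B ∈ Msig)
    (Zu : ℕ → Set (Fin m → ℝ)) (Zw Zv ZAv : Set (Fin n → ℝ))
    (R : ℕ → Set (Fin n → ℝ))
    (hR0 : R 0 = {y 0})
    (hRsucc : ∀ t, R (t + 1) =
      {z : Fin n → ℝ | ∃ M ∈ Msig, ∃ yv ∈ R t, ∃ uv ∈ Zu t, z = M.mulVec (Sum.elim yv uv)}
        + Zw + Zv + (-ZAv))
    (hu : ∀ t, u t ∈ Zu t) (hw : ∀ t, w t ∈ Zw) (hv : ∀ t, v t ∈ Zv)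
    (hAv : ∀ t, A.mulVec (v t) ∈ ZAv)
    (Yobs : Set (Fin n → ℝ)) (N : ℕ)
    (hsafe : ∀ k ≤ N, R k ∩ Yobs = ∅) :
    ∀ k ≤ N, y k ∉ Yobs := by
  have key : ∀ k, y k ∈ R k := by
    intro k
    induction k with
    | zero => simp [hR0]
    | succ t ih =>
      rw [hRsucc]
      have hcore : y (t + 1) =
          (Matrix.fromCols A B).mulVec (Sum.elim (y t) (u t)) + w t + v (t + 1)
            + (-(A.mulVec (v t))) := by
        rw [Matrix.fromCols_mulVec_sumElim, hy (t + 1), hx t, hy t,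
          Matrix.mulVec_add]
        abel
      rw [hcore]
      exact Set.add_mem_add (Set.add_mem_add (Set.add_mem_add
        ⟨Matrix.fromCols A B, hAB, y t, ih, u t, hu t, rfl⟩ (hw t)) (hv (t + 1)))
        (Set.neg_mem_neg.mpr (hAv t))
  intro k hk hm
  have := hsafe k hk
  exact Set.eq_empty_iff_forall_notMem.mp this (y k) ⟨key k, hm⟩
end
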